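/- Let r ≥ 2 be an integer and let u, v be real numbers with 1 + u > v. Define the lattices Λ = {a·(1+u, v) + b·(1, 1) : a, b ∈ ℤ} and Λ^(r) = {a·(1 + u/r, v/r) + b·(1/r, 1/r) : a, b ∈ ℤ} in ℝ². Then the following are equivalent: (S1′) Λ is disjoint from D ∪ D′; (S2′) Λ is disjoint from D′; (S3′) Λ^(r) is disjoint from D′. -/
import Mathlib


/-- The approximate diagonal `D`. -/
def Dset : Set (ℝ × ℝ) :=
  ⋃ n : ℤ, {p : ℝ × ℝ | (n : ℝ) < p.1 ∧ p.1 < (n : ℝ) + 1 ∧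
    (n : ℝ) < p.2 ∧ p.2 < (n : ℝ) + 1}

/-- The punctured enlarged diagonal set `D′`. -/
def Dprime : Set (ℝ × ℝ) :=
  ⋃ n : ℤ, {p : ℝ × ℝ | (n : ℝ) ≤ p.1 ∧ p.1 ≤ (n : ℝ) + 1 ∧
    (n : ℝ) < p.2 ∧ p.2 < (n : ℝ) + 1 ∧ p.1 ≠ p.2}

/-- The lattice `Λ` spanned over `ℤ` by `(1+u, v)` and `(1, 1)`. -/
def Lam (u v : ℝ) : Set (ℝ × ℝ) :=
  {p : ℝ × ℝ | ∃ a b : ℤ, p = ((a : ℝ) * (1 + u) + (b : ℝ), (a : ℝ) * v + (b : ℝ))}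

/-- The lattice `Λ^(r)` spanned over `ℤ` by `(1 + u/r, v/r)` and `(1/r, 1/r)`. -/
def LamR (r : ℤ) (u v : ℝ) : Set (ℝ × ℝ) :=
  {p : ℝ × ℝ | ∃ a b : ℤ,
    p = ((a : ℝ) * (1 + u / (r : ℝ)) + (b : ℝ) / (r : ℝ),
         (a : ℝ) * (v / (r : ℝ)) + (b : ℝ) / (r : ℝ))}

/-- Common endgame: an integer `M` with `u ≤ M < v` gives the characterization. -/
lemma endgame (u v : ℝ) (huv : 1 + u > v) (M : ℤ) (h1 : u ≤ (M : ℝ)) (h2 : (M : ℝ) < v) :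
    v ≠ (⌊v⌋ : ℝ) ∧ u ≤ (⌊v⌋ : ℝ) := by
  have hMF : M ≤ ⌊v⌋ := Int.le_floor.mpr h2.le
  have hMF' : (M : ℝ) ≤ (⌊v⌋ : ℝ) := by exact_mod_cast hMF
  refine ⟨?_, le_trans h1 hMF'⟩
  intro hv
  have : M < ⌊v⌋ := by
    have : (M : ℝ) < (⌊v⌋ : ℝ) := by rw [← hv]; exact h2
    exact_mod_cast this
  have : (M : ℝ) + 1 ≤ (⌊v⌋ : ℝ) := by exact_mod_cast this
  linarith [hv ▸ huv]

lemma lem2 (u v : ℝ) (huv : 1 + u > v) :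
    ¬ Disjoint (Lam u v) Dprime ↔ (v ≠ (⌊v⌋ : ℝ) ∧ u ≤ (⌊v⌋ : ℝ)) := by
  rw [Set.not_disjoint_iff]
  constructor
  · rintro ⟨p, ⟨a, b, rfl⟩, hD⟩
    simp only [Dprime, Set.mem_iUnion, Set.mem_setOf_eq] at hD
    obtain ⟨n, h1, h2, h3, h4, h5⟩ := hD
    have ha : a ≠ 0 := by
      rintro rfl
      simp at h5
    have hm1 : ((n - b : ℤ) : ℝ) < a * v := by push_cast; linarith
    have hm2 : (a : ℝ) * v < ((n - b : ℤ) : ℝ) + 1 := by push_cast; linarith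
    have hm3 : ((n - b : ℤ) : ℝ) ≤ a * (1 + u) := by push_cast; linarith
    have hm4 : (a : ℝ) * (1 + u) ≤ ((n - b : ℤ) : ℝ) + 1 := by push_cast; linarith
    set m : ℤ := n - b with hmdef
    have hF1 : (⌊v⌋ : ℝ) ≤ v := Int.floor_le v
    have hF2 : v < (⌊v⌋ : ℝ) + 1 := Int.lt_floor_add_one v
    have hvF : v ≠ (⌊v⌋ : ℝ) := by
      intro hv
      rw [hv] at hm1 hm2
      have e1' : m < a * ⌊v⌋ := by exact_mod_cast (by push_cast; linarith : (m : ℝ) < ((a * ⌊v⌋ : ℤ) : ℝ))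
      have e2'' : a * ⌊v⌋ < m + 1 := by
        exact_mod_cast (by push_cast; linarith : ((a * ⌊v⌋ : ℤ) : ℝ) < ((m + 1 : ℤ) : ℝ))
      omega
    refine ⟨hvF, ?_⟩
    rcases ha.lt_or_gt with hneg | hpos
    · have haR : (a : ℝ) < 0 := by exact_mod_cast hneg
      have e1 : (a : ℝ) * ((⌊v⌋ : ℝ) + 1) < a * v := by nlinarith
      have e3 : a * (⌊v⌋ + 1) < m + 1 := by
        exact_mod_cast (by push_cast; linarith : ((a * (⌊v⌋ + 1) : ℤ) : ℝ) < ((m + 1 : ℤ) : ℝ))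
      have e4 : a * (⌊v⌋ + 1) ≤ m := by omega
      have e5 : (a : ℝ) * ((⌊v⌋ : ℝ) + 1) ≤ a * (1 + u) := by
        calc (a : ℝ) * ((⌊v⌋ : ℝ) + 1) = ((a * (⌊v⌋ + 1) : ℤ) : ℝ) := by push_cast; ring
        _ ≤ (m : ℝ) := by exact_mod_cast e4
        _ ≤ a * (1 + u) := hm3
      nlinarith
    · have haR : (0 : ℝ) < (a : ℝ) := by exact_mod_cast hpos
      have haR1 : (1 : ℝ) ≤ (a : ℝ) := by exact_mod_cast hpos
      have e1 : (a : ℝ) * v < a * ((⌊v⌋ : ℝ) + 1) := by nlinarith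
      have e3 : m < a * (⌊v⌋ + 1) := by
        exact_mod_cast (by push_cast; linarith : ((m : ℤ) : ℝ) < ((a * (⌊v⌋ + 1) : ℤ) : ℝ))
      have e4 : m + 1 ≤ a * (⌊v⌋ + 1) := by omega
      have e5 : (a : ℝ) * (1 + u) ≤ a * ((⌊v⌋ : ℝ) + 1) := by
        calc (a : ℝ) * (1 + u) ≤ (m : ℝ) + 1 := hm4
        _ = ((m + 1 : ℤ) : ℝ) := by push_cast; ring
        _ ≤ ((a * (⌊v⌋ + 1) : ℤ) : ℝ) := by exact_mod_cast e4
        _ = (a : ℝ) * ((⌊v⌋ : ℝ) + 1) := by push_cast; ring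
      nlinarith
  · rintro ⟨hvF, huF⟩
    have hF1 : (⌊v⌋ : ℝ) ≤ v := Int.floor_le v
    have hF2 : v < (⌊v⌋ : ℝ) + 1 := Int.lt_floor_add_one v
    have hFv : (⌊v⌋ : ℝ) < v := lt_of_le_of_ne hF1 (Ne.symm hvF)
    refine ⟨(1 + u, v), ⟨1, 0, by norm_num⟩, ?_⟩
    simp only [Dprime, Set.mem_iUnion, Set.mem_setOf_eq]
    exact ⟨⌊v⌋, by linarith, by linarith, hFv, hF2, by simp; intro h; linarith⟩

lemma lem3 (r : ℤ) (hr : 2 ≤ r) (u v : ℝ) (huv : 1 + u > v) :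
    ¬ Disjoint (LamR r u v) Dprime ↔ (v ≠ (⌊v⌋ : ℝ) ∧ u ≤ (⌊v⌋ : ℝ)) := by
  have hrR : (2 : ℝ) ≤ (r : ℝ) := by exact_mod_cast hr
  have hr0 : (0 : ℝ) < (r : ℝ) := by linarith
  have hrne : (r : ℝ) ≠ 0 := ne_of_gt hr0
  rw [Set.not_disjoint_iff]
  constructor
  · rintro ⟨p, ⟨a, b, rfl⟩, hD⟩
    simp only [Dprime, Set.mem_iUnion, Set.mem_setOf_eq] at hD
    obtain ⟨n, h1, h2, h3, h4, h5⟩ := hD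
    have ha : a ≠ 0 := by
      rintro rfl
      simp at h5
    -- r * (x - y) = a * (r + u - v)
    have hkey : (a : ℝ) * ((r : ℝ) + u - v)
        = (r : ℝ) * (((a : ℝ) * (1 + u / r) + b / r) - ((a : ℝ) * (v / r) + b / r)) := by
      field_simp
      ring
    have hd1 : (a : ℝ) * ((r : ℝ) + u - v) < r := by
      rw [hkey]
      have : ((a : ℝ) * (1 + u / r) + b / r) - ((a : ℝ) * (v / r) + b / r) < 1 := by linarith
      nlinarith
    have hd2 : -(r : ℝ) < (a : ℝ) * ((r : ℝ) + u - v) := by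
      rw [hkey]
      have : (-1 : ℝ) < ((a : ℝ) * (1 + u / r) + b / r) - ((a : ℝ) * (v / r) + b / r) := by
        linarith
      nlinarith
    have ha1 : a = 1 ∨ a = -1 := by
      by_contra hcon
      push_neg at hcon
      have : 2 ≤ a ∨ a ≤ -2 := by omega
      rcases this with h | h
      · have haR : (2 : ℝ) ≤ (a : ℝ) := by exact_mod_cast h
        nlinarith
      · have haR : (a : ℝ) ≤ -2 := by exact_mod_cast h
        nlinarith
    have hc1 : u / r * r = u := div_mul_cancel₀ u hrne
    have hc2 : (b : ℝ) / r * r = b := div_mul_cancel₀ _ hrne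
    have hc3 : v / r * r = v := div_mul_cancel₀ v hrne
    rcases ha1 with rfl | rfl
    · -- a = 1 : u ≤ r*n - b < v
      have hu : u ≤ ((r * n - b : ℤ) : ℝ) := by
        have h2' := mul_le_mul_of_nonneg_left h2 hr0.le
        push_cast at h2' ⊢
        nlinarith [h2', hc1, hc2]
      have hv : ((r * n - b : ℤ) : ℝ) < v := by
        have h3' := mul_lt_mul_of_pos_left h3 hr0
        push_cast at h3' ⊢
        nlinarith [h3', hc3, hc2]
      exact endgame u v huv _ hu hv
    · -- a = -1 : u ≤ b - r*n - r < v
      have hu : u ≤ ((b - r * n - r : ℤ) : ℝ) := by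
        have h1' := mul_le_mul_of_nonneg_left h1 hr0.le
        push_cast at h1' ⊢
        nlinarith [h1', hc1, hc2]
      have hv : ((b - r * n - r : ℤ) : ℝ) < v := by
        have h4' := mul_lt_mul_of_pos_left h4 hr0
        push_cast at h4' ⊢
        nlinarith [h4', hc3, hc2]
      exact endgame u v huv _ hu hv
  · rintro ⟨hvF, huF⟩
    have hF1 : (⌊v⌋ : ℝ) ≤ v := Int.floor_le v
    have hF2 : v < (⌊v⌋ : ℝ) + 1 := Int.lt_floor_add_one v
    have hFv : (⌊v⌋ : ℝ) < v := lt_of_le_of_ne hF1 (Ne.symm hvF)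
    refine ⟨(1 + (u - ⌊v⌋) / r, (v - ⌊v⌋) / r), ⟨1, -⌊v⌋, ?_⟩, ?_⟩
    · simp only [Prod.mk.injEq]
      push_cast
      constructor
      · field_simp
        ring
      · field_simp
        linarith [Int.self_sub_floor v]
    · simp only [Dprime, Set.mem_iUnion, Set.mem_setOf_eq]
      refine ⟨0, ?_, ?_, ?_, ?_, ?_⟩
      · push_cast
        have h1 : (-1 : ℝ) ≤ (u - ⌊v⌋) / r := by
          rw [le_div_iff₀ hr0]
          nlinarith
        linarith
      · push_cast
        have h1 : (u - ⌊v⌋) / r ≤ 0 := by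
          rw [div_le_iff₀ hr0]
          nlinarith
        linarith
      · push_cast
        exact div_pos (by linarith) hr0
      · push_cast
        have h1 : (v - ⌊v⌋) / r < 1 := by
          rw [div_lt_iff₀ hr0]
          nlinarith
        linarith
      · intro h
        have hc1 : (u - ⌊v⌋) / r * r = u - ⌊v⌋ := div_mul_cancel₀ _ hrne
        have hc2 : (v - ⌊v⌋) / r * r = v - ⌊v⌋ := div_mul_cancel₀ _ hrne
        have h' : (1 + (u - ⌊v⌋) / r) * r = ((v - ⌊v⌋) / r) * r := by rw [h]
        nlinarith [h', hc1, hc2]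

theorem diagonal_expansion_contraction (r : ℤ) (hr : 2 ≤ r) (u v : ℝ) (huv : 1 + u > v) :
    (Disjoint (Lam u v) (Dset ∪ Dprime) ↔ Disjoint (Lam u v) Dprime) ∧
    (Disjoint (Lam u v) Dprime ↔ Disjoint (LamR r u v) Dprime) := by
  constructor
  · constructor
    · exact fun h => h.mono_right Set.subset_union_right
    · intro h
      rw [Set.disjoint_union_right]
      refine ⟨?_, h⟩
      rw [Set.disjoint_left]
      rintro p ⟨a, b, rfl⟩ hpD
      simp only [Dset, Set.mem_iUnion, Set.mem_setOf_eq] at hpD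
      obtain ⟨n, h1, h2, h3, h4⟩ := hpD
      have hxy : (a : ℝ) * (1 + u) + b ≠ (a : ℝ) * v + b := by
        intro he
        have ha : (a : ℝ) = 0 := by
          rcases eq_or_ne (a : ℝ) 0 with h | h
          · exact h
          · exfalso
            have : (a : ℝ) * ((1 + u) - v) = 0 := by linarith
            exact h (by rcases mul_eq_zero.mp this with h' | h'; exact h'; linarith)
        rw [ha] at h1 h2
        simp at h1 h2
        have e1 : n < b := by exact_mod_cast h1
        have e2 : b < n + 1 := by exact_mod_cast (by push_cast; linarith : (b:ℝ) < ((n+1:ℤ):ℝ))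
        omega
      have : ((a : ℝ) * (1 + u) + b, (a : ℝ) * v + b) ∈ Dprime := by
        simp only [Dprime, Set.mem_iUnion, Set.mem_setOf_eq]
        exact ⟨n, le_of_lt h1, le_of_lt h2, h3, h4, hxy⟩
      exact Set.disjoint_left.mp h ⟨a, b, rfl⟩ this
  · have e2 := lem2 u v huv
    have e3 := lem3 r hr u v huv
    exact not_iff_not.mp (e2.trans e3.symm)
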